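/- arXiv:1208.5248 — 6 statements merged into one kernel-verified Lean document; each statement's English description precedes it below -/
import Mathlib

section
/- Let m, r be positive integers with r < m, and let V ⊆ R^m be a linear subspace with dim V ≤ m − 2. Then for Lebesgue-almost every (x_1,…,x_{r+m}) ∈ [0,1]^{r+m}, setting W = span{(x_1,…,x_m), (x_{r+1},…,x_{r+m})} ⊆ R^m, one has dim(V + W) = dim V + 2. -/
open MeasureTheory Module Submodule

/-- `Fin.cons 0` as a linear map. -/
def aux_ext (n : ℕ) : (Fin n → ℝ) →ₗ[ℝ] (Fin (n+1) → ℝ) where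
  toFun y := Fin.cons 0 y
  map_add' y z := by
    funext j
    refine Fin.cases ?_ (fun i => ?_) j <;> simp
  map_smul' c y := by
    funext j
    refine Fin.cases ?_ (fun i => ?_) j <;> simp

lemma aux_cons_decomp (n : ℕ) (t : ℝ) (y : Fin n → ℝ) :
    Fin.cons t y = t • (Fin.cons 1 0 : Fin (n+1) → ℝ) + aux_ext n y := by
  funext j
  refine Fin.cases ?_ (fun i => ?_) j <;> simp [aux_ext]

lemma aux_quad_null : ∀ (n : ℕ) (L1 L2 L3 L4 : (Fin n → ℝ) →ₗ[ℝ] ℝ) (x0 : Fin n → ℝ),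
    L1 x0 * L2 x0 - L3 x0 * L4 x0 ≠ 0 →
    volume {x : Fin n → ℝ | L1 x * L2 x - L3 x * L4 x = 0} = 0 := by
  intro n
  induction n with
  | zero =>
      intro L1 L2 L3 L4 x0 h
      exfalso
      have hx0 : x0 = 0 := Subsingleton.elim _ _
      rw [hx0, map_zero, map_zero, map_zero, map_zero] at h
      simp at h
  | succ n IH =>
      intro L1 L2 L3 L4 x0 h
      set d : Fin (n+1) → ℝ := Fin.cons 1 0 with hd
      set ι := aux_ext n with hι
      set a : ℝ := L1 d * L2 d - L3 d * L4 d with ha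
      set q1 := L1 ∘ₗ ι with hq1
      set q2 := L2 ∘ₗ ι with hq2
      set q3 := L3 ∘ₗ ι with hq3
      set q4 := L4 ∘ₗ ι with hq4
      set bb : (Fin n → ℝ) →ₗ[ℝ] ℝ :=
        L1 d • q2 + L2 d • q1 - L3 d • q4 - L4 d • q3 with hbb
      set cc : (Fin n → ℝ) → ℝ := fun y => q1 y * q2 y - q3 y * q4 y with hcc
      have hA : ∀ (t : ℝ) (y : Fin n → ℝ),
          L1 (Fin.cons t y) * L2 (Fin.cons t y) - L3 (Fin.cons t y) * L4 (Fin.cons t y)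
            = a * t^2 + bb y * t + cc y := by
        intro t y
        rw [aux_cons_decomp]
        simp only [map_add, _root_.map_smul, smul_eq_mul, hbb, LinearMap.sub_apply, LinearMap.add_apply,
          LinearMap.smul_apply, smul_eq_mul, hq1, hq2, hq3, hq4, LinearMap.comp_apply, ha, hcc]
        ring
      -- transfer to the product space
      set S' : Set (ℝ × (Fin n → ℝ)) :=
        {p | a * p.1^2 + bb p.2 * p.1 + cc p.2 = 0} with hS'
      have hScont : Continuous fun p : ℝ × (Fin n → ℝ) => a * p.1^2 + bb p.2 * p.1 + cc p.2 := by
        apply Continuous.add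
        apply Continuous.add
        · exact continuous_const.mul ((continuous_fst).pow 2)
        · exact (bb.continuous_of_finiteDimensional.comp continuous_snd).mul continuous_fst
        · exact ((q1.continuous_of_finiteDimensional.comp continuous_snd).mul (q2.continuous_of_finiteDimensional.comp continuous_snd)).sub
            ((q3.continuous_of_finiteDimensional.comp continuous_snd).mul (q4.continuous_of_finiteDimensional.comp continuous_snd))
      have hS'meas : MeasurableSet S' :=
        (isClosed_singleton.preimage hScont).measurableSet
      have e := MeasurableEquiv.piFinSuccAbove (fun _ : Fin (n+1) => ℝ) 0
      have hmp := (volume_preserving_piFinSuccAbove (fun _ : Fin (n+1) => ℝ) 0).symm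
      have hpre : (MeasurableEquiv.piFinSuccAbove (fun _ : Fin (n+1) => ℝ) 0).symm ⁻¹'
          {x : Fin (n+1) → ℝ | L1 x * L2 x - L3 x * L4 x = 0} = S' := by
        ext ⟨t, y⟩
        have : (MeasurableEquiv.piFinSuccAbove (fun _ : Fin (n+1) => ℝ) 0).symm (t, y)
            = Fin.cons t y := by
          simp [MeasurableEquiv.piFinSuccAbove, Fin.insertNthEquiv, Fin.insertNth_zero']
        simp only [Set.mem_preimage, Set.mem_setOf_eq, this, hA t y, hS']
      have hsetmeas : MeasurableSet {x : Fin (n+1) → ℝ | L1 x * L2 x - L3 x * L4 x = 0} := by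
        have : Continuous fun x : Fin (n+1) → ℝ => L1 x * L2 x - L3 x * L4 x :=
          (L1.continuous_of_finiteDimensional.mul L2.continuous_of_finiteDimensional).sub (L3.continuous_of_finiteDimensional.mul L4.continuous_of_finiteDimensional)
        exact (isClosed_singleton.preimage this).measurableSet
      have key : volume {x : Fin (n+1) → ℝ | L1 x * L2 x - L3 x * L4 x = 0}
          = (volume : Measure (ℝ × (Fin n → ℝ))) S' := by
        rw [← hmp.measure_preimage hsetmeas.nullMeasurableSet, hpre]
      rw [key, Measure.volume_eq_prod, Measure.prod_apply_symm hS'meas]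
      have hNbad : volume {y : Fin n → ℝ | a = 0 ∧ bb y = 0 ∧ cc y = 0} = 0 := by
        by_cases hazero : a = 0
        · by_cases hbbzero : ∀ y, bb y = 0
          · have hw : q1 (Fin.tail x0) * q2 (Fin.tail x0)
                - q3 (Fin.tail x0) * q4 (Fin.tail x0) ≠ 0 := by
              have hx0' : x0 = Fin.cons (x0 0) (Fin.tail x0) := (Fin.cons_self_tail x0).symm
              rw [hx0', hA] at h
              simpa [hazero, hbbzero (Fin.tail x0)] using h
            refine measure_mono_null ?_ (IH q1 q2 q3 q4 (Fin.tail x0) hw)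
            intro y hy
            exact hy.2.2
          · push_neg at hbbzero
            obtain ⟨y0, hy0⟩ := hbbzero
            have hker : LinearMap.ker bb ≠ ⊤ := by
              intro hk
              exact hy0 (LinearMap.mem_ker.1 (hk ▸ Submodule.mem_top))
            refine measure_mono_null ?_ (Measure.addHaar_submodule volume (LinearMap.ker bb) hker)
            intro y hy
            exact LinearMap.mem_ker.2 hy.2.1
        · have hemp : {y : Fin n → ℝ | a = 0 ∧ bb y = 0 ∧ cc y = 0} = ∅ := by
            ext y; simp [hazero]
          simp [hemp]
      have hslice : ∀ y ∉ {y : Fin n → ℝ | a = 0 ∧ bb y = 0 ∧ cc y = 0},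
          volume ((fun t : ℝ => (t, y)) ⁻¹' S') = 0 := by
        intro y hy
        have hfin : Set.Finite {t : ℝ | a * t^2 + bb y * t + cc y = 0} := by
          set P : Polynomial ℝ := Polynomial.C a * Polynomial.X^2
            + Polynomial.C (bb y) * Polynomial.X + Polynomial.C (cc y) with hP
          have hPne : P ≠ 0 := by
            intro h0
            apply hy
            have h2 := congrArg (fun p : Polynomial ℝ => p.coeff 2) h0
            have h1 := congrArg (fun p : Polynomial ℝ => p.coeff 1) h0
            have h0' := congrArg (fun p : Polynomial ℝ => p.coeff 0) h0
            simp [hP, Polynomial.coeff_add, Polynomial.coeff_C_mul, Polynomial.coeff_X_pow,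
              Polynomial.coeff_C, Polynomial.coeff_X] at h2 h1 h0'
            exact ⟨h2, h1, h0'⟩
          have hroots : {t : ℝ | a * t^2 + bb y * t + cc y = 0} = {t | P.IsRoot t} := by
            ext t
            simp [hP, Polynomial.IsRoot]
          rw [hroots]
          exact Polynomial.finite_setOf_isRoot hPne
        have hpre2 : ((fun t : ℝ => (t, y)) ⁻¹' S') = {t : ℝ | a * t^2 + bb y * t + cc y = 0} :=
          rfl
        rw [hpre2]
        exact hfin.measure_zero _
      have hae : (fun y => volume ((fun t : ℝ => (t, y)) ⁻¹' S')) =ᵐ[volume] 0 := by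
        rw [Filter.EventuallyEq, MeasureTheory.ae_iff]
        refine measure_mono_null ?_ hNbad
        intro y hy
        by_contra hmem
        exact hy (hslice y hmem)
      rw [lintegral_congr_ae hae]; simp


lemma aux_rank_step {m : ℕ} (W : Submodule ℝ (Fin m → ℝ)) (w : Fin m → ℝ) (hw : w ∉ W) :
    finrank ℝ ↥(W ⊔ span ℝ {w}) = finrank ℝ ↥W + 1 := by
  have hw0 : w ≠ 0 := fun h => hw (h ▸ W.zero_mem)
  have hinf : W ⊓ span ℝ {w} = ⊥ := by
    rw [eq_bot_iff]
    intro z hz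
    rw [Submodule.mem_inf] at hz
    obtain ⟨c, rfl⟩ := Submodule.mem_span_singleton.1 hz.2
    rcases eq_or_ne c 0 with rfl | hc
    · simp
    · exfalso
      apply hw
      have := W.smul_mem c⁻¹ hz.1
      rwa [smul_smul, inv_mul_cancel₀ hc, one_smul] at this
  have h := Submodule.finrank_sup_add_finrank_inf_eq W (span ℝ {w})
  rw [hinf, finrank_bot, finrank_span_singleton hw0] at h
  omega

lemma aux_rank2 {m : ℕ} (V : Submodule ℝ (Fin m → ℝ)) (u v : Fin m → ℝ)
    (hv : v ∉ V) (hu : u ∉ V ⊔ span ℝ {v}) :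
    finrank ℝ ↥(V ⊔ span ℝ {u, v}) = finrank ℝ ↥V + 2 := by
  have h1 : V ⊔ span ℝ {u, v} = (V ⊔ span ℝ {v}) ⊔ span ℝ {u} := by
    rw [Submodule.span_insert, sup_comm (span ℝ {u}) (span ℝ {v}), ← sup_assoc]
  rw [h1, aux_rank_step _ u hu, aux_rank_step V v hv]

def aux_u (m r : ℕ) : (Fin (r + m) → ℝ) →ₗ[ℝ] (Fin m → ℝ) :=
  LinearMap.funLeft ℝ ℝ (Fin.castLE (Nat.le_add_left m r))

def aux_v (m r : ℕ) : (Fin (r + m) → ℝ) →ₗ[ℝ] (Fin m → ℝ) :=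
  LinearMap.funLeft ℝ ℝ
    (fun j : Fin m => (⟨r + (j : ℕ), Nat.add_lt_add_left j.isLt r⟩ : Fin (r + m)))

def aux_T (m r : ℕ) : (Fin m → ℝ) →ₗ[ℝ] (Fin m → ℝ) where
  toFun w j := if (j : ℕ) < r then 0 else w ⟨(j : ℕ) - r, lt_of_le_of_lt (Nat.sub_le _ _) j.isLt⟩
  map_add' w z := by funext j; by_cases h : (j : ℕ) < r <;> simp [h]
  map_smul' c w := by funext j; by_cases h : (j : ℕ) < r <;> simp [h]

lemma aux_T_pow (m r : ℕ) : ∀ (k : ℕ) (w : Fin m → ℝ) (j : Fin m),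
    (j : ℕ) < k * r → ((aux_T m r ^ k) w) j = 0 := by
  intro k
  induction k with
  | zero => intro w j hj; omega
  | succ k IH =>
      intro w j hj
      rw [pow_succ']
      show (aux_T m r) ((aux_T m r ^ k) w) j = 0
      by_cases h : (j : ℕ) < r
      · simp [aux_T, h]
      · simp only [aux_T, LinearMap.coe_mk, AddHom.coe_mk, if_neg h]
        refine IH w _ ?_
        show (j : ℕ) - r < k * r
        have hkr : (k + 1) * r = k * r + r := by ring
        omega

def aux_glue (m r : ℕ) (a : Fin r → ℝ) (w : Fin m → ℝ) : Fin (r + m) → ℝ :=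
  fun i => if h : (i : ℕ) < r then a ⟨i, h⟩ else w ⟨(i : ℕ) - r, by have := i.isLt; omega⟩

def aux_iota (m r : ℕ) (a : Fin r → ℝ) : Fin m → ℝ :=
  fun j => if h : (j : ℕ) < r then a ⟨j, h⟩ else 0

lemma aux_v_glue (m r : ℕ) (a : Fin r → ℝ) (w : Fin m → ℝ) :
    aux_v m r (aux_glue m r a w) = w := by
  funext j
  show aux_glue m r a w ⟨r + (j : ℕ), _⟩ = w j
  simp only [aux_glue]
  rw [dif_neg (by simp)]
  congr 1
  exact Fin.ext (by simp)

lemma aux_u_glue (m r : ℕ) (a : Fin r → ℝ) (w : Fin m → ℝ) :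
    aux_u m r (aux_glue m r a w) = aux_iota m r a + aux_T m r w := by
  funext j
  show aux_glue m r a w (Fin.castLE _ j) = _
  by_cases h : (j : ℕ) < r
  · simp [aux_glue, aux_iota, aux_T, h]
  · simp [aux_glue, aux_iota, aux_T, h]

lemma aux_witness (m r : ℕ) (hr : 0 < r) (hrm : r < m) (V : Submodule ℝ (Fin m → ℝ))
    (hV : finrank ℝ ↥V ≤ m - 2) :
    ∃ x : Fin (r + m) → ℝ, aux_v m r x ∉ V ∧ aux_u m r x ∉ V ⊔ span ℝ {aux_v m r x} := by
  by_contra hcon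
  push_neg at hcon
  have htop : finrank ℝ ↥(⊤ : Submodule ℝ (Fin m → ℝ)) = m := by
    rw [finrank_top]; exact Module.finrank_fin_fun ℝ
  -- Step 0: basic claim from the negation
  have claim1 : ∀ w ∉ V, aux_T m r w ∈ V ⊔ span ℝ {w} ∧
      ∀ a : Fin r → ℝ, aux_iota m r a ∈ V ⊔ span ℝ {w} := by
    intro w hw
    have hball : ∀ a : Fin r → ℝ, aux_iota m r a + aux_T m r w ∈ V ⊔ span ℝ {w} := by
      intro a
      have h1 := hcon (aux_glue m r a w)
      rw [aux_v_glue, aux_u_glue] at h1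
      exact h1 hw
    have hz : aux_iota m r 0 = 0 := by
      funext j; by_cases h : (j : ℕ) < r <;> simp [aux_iota, h]
    have hT : aux_T m r w ∈ V ⊔ span ℝ {w} := by
      have h0 := hball 0
      rwa [hz, zero_add] at h0
    refine ⟨hT, fun a => ?_⟩
    have h2 := Submodule.sub_mem _ (hball a) hT
    simpa using h2
  -- v1, v2
  have hVne : V ≠ ⊤ := by
    intro h
    rw [h, htop] at hV
    omega
  obtain ⟨v1, hv1⟩ : ∃ v1, v1 ∉ V := by
    by_contra hno; push_neg at hno
    exact hVne (Submodule.eq_top_iff'.2 hno)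
  have hW1ne : V ⊔ span ℝ {v1} ≠ ⊤ := by
    intro h
    have := aux_rank_step V v1 hv1
    rw [h, htop] at this
    omega
  obtain ⟨v2, hv2⟩ : ∃ v2, v2 ∉ V ⊔ span ℝ {v1} := by
    by_contra hno; push_neg at hno
    exact hW1ne (Submodule.eq_top_iff'.2 hno)
  have hv2V : v2 ∉ V := fun h => hv2 (Submodule.mem_sup_left h)
  have hinter : ∀ z, z ∈ V ⊔ span ℝ {v1} → z ∈ V ⊔ span ℝ {v2} → z ∈ V := by
    intro z h1 h2
    obtain ⟨p, hp, s, hs, rfl⟩ := Submodule.mem_sup.1 h2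
    obtain ⟨c, rfl⟩ := Submodule.mem_span_singleton.1 hs
    rcases eq_or_ne c 0 with rfl | hc
    · simpa using hp
    · exfalso
      apply hv2
      have hcv : c • v2 ∈ V ⊔ span ℝ {v1} := by
        have h3 := Submodule.sub_mem _ h1 (Submodule.mem_sup_left hp)
        simpa using h3
      have h4 := Submodule.smul_mem _ c⁻¹ hcv
      rwa [smul_smul, inv_mul_cancel₀ hc, one_smul] at h4
  have hiotaV : ∀ a : Fin r → ℝ, aux_iota m r a ∈ V := fun a =>
    hinter _ ((claim1 v1 hv1).2 a) ((claim1 v2 hv2V).2 a)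
  have hTV : ∀ p ∈ V, aux_T m r p ∈ V := by
    intro p hp
    have key : ∀ v, v ∉ V → aux_T m r p ∈ V ⊔ span ℝ {v} := by
      intro v hv
      have hpv : p + v ∉ V := fun h => hv (by simpa using Submodule.sub_mem _ h hp)
      have h1 := (claim1 _ hpv).1
      have hle : V ⊔ span ℝ {p + v} ≤ V ⊔ span ℝ {v} := by
        apply sup_le le_sup_left
        rw [Submodule.span_singleton_le_iff_mem]
        exact Submodule.add_mem _ (Submodule.mem_sup_left hp)
          (Submodule.mem_sup_right (Submodule.mem_span_singleton_self v))
      have hTpv := hle h1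
      rw [map_add] at hTpv
      have hTv := (claim1 v hv).1
      have h2 := Submodule.sub_mem _ hTpv hTv
      simpa using h2
    exact hinter _ (key v1 hv1) (key v2 hv2V)
  have hTall : ∀ w, aux_T m r w ∈ V := by
    intro w
    by_contra hTw
    have hwV : w ∉ V := fun h => hTw (hTV w h)
    obtain ⟨p, hp, s, hs, hsum⟩ := Submodule.mem_sup.1 (claim1 w hwV).1
    obtain ⟨c, rfl⟩ := Submodule.mem_span_singleton.1 hs
    have hc0 : c ≠ 0 := by
      rintro rfl
      apply hTw
      rw [← hsum]
      simpa using hp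
    have hpeq : aux_T m r w - c • w = p := by rw [← hsum]; abel
    have hiter : ∀ k : ℕ, (aux_T m r ^ k) w - c ^ k • w ∈ V := by
      intro k
      induction k with
      | zero => simpa using V.zero_mem
      | succ k IHk =>
          have e1 : (aux_T m r ^ (k + 1)) w - c ^ (k + 1) • w
              = aux_T m r ((aux_T m r ^ k) w - c ^ k • w) + c ^ k • (aux_T m r w - c • w) := by
            rw [pow_succ']
            show (aux_T m r) ((aux_T m r ^ k) w) - c ^ (k + 1) • w = _
            rw [map_sub, _root_.map_smul, smul_sub, smul_smul, ← pow_succ]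
            abel
          rw [e1]
          exact Submodule.add_mem _ (hTV _ IHk)
            (Submodule.smul_mem _ _ (hpeq ▸ hp))
    have hm0 := hiter m
    have hTm : (aux_T m r ^ m) w = 0 := by
      funext j
      refine aux_T_pow m r m w j ?_
      have h1 : m ≤ m * r := Nat.le_mul_of_pos_right m hr
      have := j.isLt
      omega
    rw [hTm] at hm0
    have h5 : c ^ m • w ∈ V := by simpa using Submodule.neg_mem _ hm0
    have h6 := Submodule.smul_mem _ (c ^ m)⁻¹ h5
    rw [smul_smul, inv_mul_cancel₀ (pow_ne_zero _ hc0), one_smul] at h6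
    exact hwV h6
  have hall : ∀ z : Fin m → ℝ, z ∈ V := by
    intro z
    set a : Fin r → ℝ := fun j => z ⟨j, lt_trans j.isLt hrm⟩ with ha2
    set w : Fin m → ℝ := fun j => if h : (j : ℕ) + r < m then z ⟨(j : ℕ) + r, h⟩ else 0 with hw2
    have hz : z = aux_iota m r a + aux_T m r w := by
      funext j
      by_cases h : (j : ℕ) < r
      · simp [aux_iota, aux_T, h, ha2]
      · simp only [aux_iota, aux_T, LinearMap.coe_mk, AddHom.coe_mk, dif_neg h, if_neg h,
          Pi.add_apply, zero_add, hw2]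
        rw [dif_pos (by have := j.isLt; omega)]
        congr 1
        exact Fin.ext (by simp; omega)
    rw [hz]
    exact Submodule.add_mem _ (hiotaV a) (hTall w)
  have hfin : finrank ℝ ↥V = m := by
    have hVt : V = ⊤ := Submodule.eq_top_iff'.2 hall
    rw [hVt, htop]
  omega


theorem stmt_4 (m r : ℕ) (hm : 0 < m) (hr : 0 < r) (hrm : r < m)
    (V : Submodule ℝ (Fin m → ℝ)) (hV : Module.finrank ℝ V ≤ m - 2) :
    ∀ᵐ x : Fin (r + m) → ℝ ∂volume,
      (∀ i, x i ∈ Set.Icc (0 : ℝ) 1) →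
        Module.finrank ℝ
          (V ⊔ Submodule.span ℝ
            {(fun j : Fin m => x (Fin.castLE (Nat.le_add_left m r) j)),
             (fun j : Fin m => x ⟨r + j, by omega⟩)} : Submodule ℝ (Fin m → ℝ))
          = Module.finrank ℝ V + 2 := by
  obtain ⟨xw, hvw, huw⟩ := aux_witness m r hr hrm V hV
  obtain ⟨f0, hf0ne, hf0map⟩ := Submodule.exists_dual_map_eq_bot_of_notMem huw inferInstance
  obtain ⟨g0, hg0ne, hg0map⟩ := Submodule.exists_dual_map_eq_bot_of_notMem hvw inferInstance
  set f : (Fin m → ℝ) →ₗ[ℝ] ℝ := (f0 (aux_u m r xw))⁻¹ • f0 with hf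
  set g : (Fin m → ℝ) →ₗ[ℝ] ℝ := (g0 (aux_v m r xw))⁻¹ • g0 with hg
  have hfW : ∀ z ∈ V ⊔ span ℝ {aux_v m r xw}, f z = 0 := by
    intro z hz
    have h1 : f0 z ∈ Submodule.map f0 (V ⊔ span ℝ {aux_v m r xw}) :=
      Submodule.mem_map_of_mem hz
    rw [hf0map, Submodule.mem_bot] at h1
    simp [hf, h1]
  have hfV : ∀ z ∈ V, f z = 0 := fun z hz => hfW z (Submodule.mem_sup_left hz)
  have hgV : ∀ z ∈ V, g z = 0 := by
    intro z hz
    have h1 : g0 z ∈ Submodule.map g0 V := Submodule.mem_map_of_mem hz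
    rw [hg0map, Submodule.mem_bot] at h1
    simp [hg, h1]
  have hfv : f (aux_v m r xw) = 0 :=
    hfW _ (Submodule.mem_sup_right (Submodule.mem_span_singleton_self _))
  have hfu : f (aux_u m r xw) = 1 := by
    simp [hf, inv_mul_cancel₀ hf0ne]
  have hgv : g (aux_v m r xw) = 1 := by
    simp [hg, inv_mul_cancel₀ hg0ne]
  set L1 : (Fin (r + m) → ℝ) →ₗ[ℝ] ℝ := f ∘ₗ aux_u m r with hL1
  set L2 : (Fin (r + m) → ℝ) →ₗ[ℝ] ℝ := g ∘ₗ aux_v m r with hL2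
  set L3 : (Fin (r + m) → ℝ) →ₗ[ℝ] ℝ := g ∘ₗ aux_u m r with hL3
  set L4 : (Fin (r + m) → ℝ) →ₗ[ℝ] ℝ := f ∘ₗ aux_v m r with hL4
  have hwit : L1 xw * L2 xw - L3 xw * L4 xw ≠ 0 := by
    simp only [hL1, hL2, hL3, hL4, LinearMap.comp_apply, hfu, hgv, hfv]
    norm_num
  have hnull := aux_quad_null (r + m) L1 L2 L3 L4 xw hwit
  rw [MeasureTheory.ae_iff]
  refine measure_mono_null ?_ hnull
  intro x hx
  simp only [Set.mem_setOf_eq] at hx ⊢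
  by_contra hD
  apply hx
  intro _
  have hD' : f (aux_u m r x) * g (aux_v m r x) - g (aux_u m r x) * f (aux_v m r x) ≠ 0 := hD
  have hvV : aux_v m r x ∉ V := by
    intro hmem
    apply hD'
    rw [hgV _ hmem, hfV _ hmem]
    ring
  have huV : aux_u m r x ∉ V ⊔ span ℝ {aux_v m r x} := by
    intro hmem
    apply hD'
    obtain ⟨p, hp, s, hs, hsum⟩ := Submodule.mem_sup.1 hmem
    obtain ⟨c, rfl⟩ := Submodule.mem_span_singleton.1 hs
    have hfu2 : f (aux_u m r x) = c * f (aux_v m r x) := by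
      rw [← hsum, map_add, _root_.map_smul, hfV _ hp, smul_eq_mul, zero_add]
    have hgu2 : g (aux_u m r x) = c * g (aux_v m r x) := by
      rw [← hsum, map_add, _root_.map_smul, hgV _ hp, smul_eq_mul, zero_add]
    rw [hfu2, hgu2]
    ring
  exact aux_rank2 V _ _ hvV huV
end

section
/- Let (X,T) be a topological dynamical system (X compact metric, T a homeomorphism) and let n be a positive integer. Then (X,T) has a closed n-marker if and only if it has an open n-marker. -/
open Metric Set

/-- `F` is an `n`-marker for the homeomorphism `T`. -/
def IsNMarker {X : Type*} [TopologicalSpace X] (T : X ≃ₜ X) (n : ℕ) (F : Set X) : Prop :=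
  (∀ i : ℕ, 1 ≤ i → i ≤ n - 1 → F ∩ (⇑T)^[i] '' F = ∅) ∧
  ∃ m : ℕ, ∀ x : X, ∃ i : ℕ, 1 ≤ i ∧ i ≤ m ∧ x ∈ (⇑T)^[i] '' F

theorem stmt_5 {X : Type*} [MetricSpace X] [CompactSpace X] (T : X ≃ₜ X)
    (n : ℕ) (hn : 0 < n) :
    (∃ F : Set X, IsClosed F ∧ IsNMarker T n F) ↔
      (∃ U : Set X, IsOpen U ∧ IsNMarker T n U) := by
  constructor
  · rintro ⟨F, hF, hdisj, m, hcov⟩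
    -- For each relevant i, find a thickening parameter.
    have key : ∀ i ∈ Finset.Icc 1 (n-1), ∃ δ : ℝ, 0 < δ ∧
        thickening δ F ∩ (⇑T)^[i] '' thickening δ F = ∅ := by
      intro i hi
      rw [Finset.mem_Icc] at hi
      have hFc : IsCompact F := hF.isCompact
      have hTi : Continuous ((⇑T)^[i]) := T.continuous.iterate i
      have hTiF : IsClosed ((⇑T)^[i] '' F) := (hFc.image hTi).isClosed
      have hd : Disjoint F ((⇑T)^[i] '' F) :=
        Set.disjoint_iff_inter_eq_empty.2 (hdisj i hi.1 hi.2)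
      obtain ⟨ε, hε, hdis⟩ := hd.exists_thickenings hFc hTiF
      have huc : UniformContinuous ((⇑T)^[i]) :=
        CompactSpace.uniformContinuous_of_continuous hTi
      obtain ⟨δ', hδ', hδ'e⟩ := Metric.uniformContinuous_iff.1 huc ε hε
      refine ⟨min ε δ', lt_min hε hδ', ?_⟩
      ext x
      simp only [Set.mem_inter_iff, Set.mem_empty_iff_false, iff_false]
      rintro ⟨hx1, y, hy, rfl⟩
      have hx1' : (⇑T)^[i] y ∈ thickening ε F :=
        thickening_mono (min_le_left _ _) F hx1
      obtain ⟨z, hz, hyz⟩ := mem_thickening_iff.1 hy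
      have : (⇑T)^[i] y ∈ thickening ε ((⇑T)^[i] '' F) := by
        rw [mem_thickening_iff]
        exact ⟨(⇑T)^[i] z, ⟨z, hz, rfl⟩, hδ'e (lt_of_lt_of_le hyz (min_le_right _ _))⟩
      exact Set.disjoint_iff.1 hdis ⟨hx1', this⟩ 
    choose! δf hδf1 hδf2 using key
    set s : Finset ℝ := insert (1:ℝ) ((Finset.Icc 1 (n-1)).image δf) with hs
    have hsne : s.Nonempty := ⟨1, Finset.mem_insert_self _ _⟩
    set δ : ℝ := s.min' hsne with hδdef
    have hδpos : 0 < δ := by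
      rcases Finset.mem_insert.1 (s.min'_mem hsne) with h | h
      · rw [hδdef, h]; norm_num
      · obtain ⟨i, hi, hie⟩ := Finset.mem_image.1 h
        exact lt_of_lt_of_eq (hδf1 i hi) hie
    refine ⟨thickening δ F, isOpen_thickening, ?_, m, ?_⟩
    · intro i h1 h2
      have hi : i ∈ Finset.Icc 1 (n-1) := Finset.mem_Icc.2 ⟨h1, h2⟩
      have hle : δ ≤ δf i :=
        Finset.min'_le _ _ (Finset.mem_insert_of_mem (Finset.mem_image_of_mem _ hi))
      have hsub : thickening δ F ⊆ thickening (δf i) F := thickening_mono hle F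
      have := hδf2 i hi
      rw [← Set.subset_empty_iff] at this ⊢
      exact fun x hx => this ⟨hsub hx.1, Set.image_mono hsub hx.2⟩
    · intro x
      obtain ⟨i, h1, h2, hx⟩ := hcov x
      exact ⟨i, h1, h2, Set.image_mono (self_subset_thickening hδpos F) hx⟩
  · rintro ⟨U, hU, hdisj, m, hcov⟩
    -- the cover by T^[i+1] '' U, i : Fin m
    set u : Fin m → Set X := fun i => (⇑T)^[(i:ℕ)+1] '' U with hu
    have himg : ∀ (k : ℕ) (S : Set X), (⇑T)^[k] '' S = (⇑T.symm)^[k] ⁻¹' S := fun k S =>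
      congrFun (Set.image_eq_preimage_of_inverse
        (Function.LeftInverse.iterate T.symm_apply_apply k)
        (Function.LeftInverse.iterate T.apply_symm_apply k)) S
    have huo : ∀ i, IsOpen (u i) := fun i => by
      rw [hu]; dsimp only; rw [himg]
      exact hU.preimage (T.symm.continuous.iterate _)
    have hcov' : (Set.univ : Set X) ⊆ ⋃ i, u i := by
      intro x _
      obtain ⟨i, h1, h2, hx⟩ := hcov x
      refine Set.mem_iUnion.2 ⟨⟨i - 1, by omega⟩, ?_⟩
      simp only [hu]
      have : i - 1 + 1 = i := by omega
      rw [this]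
      exact hx
    obtain ⟨v, hsv, hvc, hvu⟩ := exists_subset_iUnion_closed_subset isClosed_univ huo
      (fun x _ => Set.toFinite _) hcov'
    set F : Set X := ⋃ i : Fin m, (⇑T)^[(i:ℕ)+1] ⁻¹' (v i) with hFdef
    have hFU : F ⊆ U := by
      rintro x hx
      obtain ⟨i, hi⟩ := Set.mem_iUnion.1 hx
      have : (⇑T)^[(i:ℕ)+1] x ∈ u i := hvu i hi
      obtain ⟨y, hy, hxy⟩ := this
      have hinj : Function.Injective ((⇑T)^[(i:ℕ)+1]) := T.injective.iterate _
      rwa [← hinj hxy]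
    refine ⟨F, ?_, ?_, m, ?_⟩
    · exact isClosed_iUnion_of_finite fun i => (hvc i).preimage (T.continuous.iterate _)
    · intro i h1 h2
      have := hdisj i h1 h2
      rw [← Set.subset_empty_iff] at this ⊢
      exact fun x hx => this ⟨hFU hx.1, Set.image_mono hFU hx.2⟩
    · intro x
      have := hsv (Set.mem_univ x)
      obtain ⟨i, hi⟩ := Set.mem_iUnion.1 this
      refine ⟨(i:ℕ)+1, by omega, by omega, ?_⟩
      refine ⟨(⇑T.symm)^[(i:ℕ)+1] x, ?_, ?_⟩
      · apply Set.mem_iUnion.2 ⟨i, ?_⟩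
        simp only [Set.mem_preimage]
        rwa [Function.LeftInverse.iterate T.apply_symm_apply ((i:ℕ)+1) x]
      · exact Function.LeftInverse.iterate T.apply_symm_apply ((i:ℕ)+1) x
end

section
/- Let X be a compact metric space, T : X → X a homeomorphism, and K ⊆ (X×X)∖Δ a compact set, where Δ is the diagonal. Then the set D_K = {f ∈ C(X,[0,1]^d) : for every (x,y) ∈ K there exists n ∈ Z with f(T^n x) ≠ f(T^n y)} is open in C(X,[0,1]^d) with the supremum metric. -/
private lemma zpow_continuous_aux {X : Type*} [MetricSpace X] (T : X ≃ₜ X) :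
    ∀ n : ℤ, Continuous fun x : X => (T.toEquiv ^ n) x := by
  intro n
  induction n using Int.induction_on with
  | zero => simpa using continuous_id'
  | succ k ih =>
      have h : T.toEquiv ^ ((k : ℤ) + 1) = T.toEquiv ^ (k : ℤ) * T.toEquiv :=
        zpow_add_one _ _
      have : (fun x : X => (T.toEquiv ^ ((k : ℤ) + 1)) x)
          = fun x : X => (T.toEquiv ^ (k : ℤ)) (T x) := by
        funext x; rw [h]; rfl
      rw [this]
      exact ih.comp T.continuous
  | pred k ih =>
      have h : T.toEquiv ^ (-(k : ℤ) - 1) = T.toEquiv ^ (-(k : ℤ)) * T.toEquiv⁻¹ := by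
        rw [zpow_sub_one]
      have : (fun x : X => (T.toEquiv ^ (-(k : ℤ) - 1)) x)
          = fun x : X => (T.toEquiv ^ (-(k : ℤ))) (T.symm x) := by
        funext x; rw [h]; rfl
      rw [this]
      exact ih.comp T.symm.continuous

theorem stmt_6 {X : Type*} [MetricSpace X] [CompactSpace X] (d : ℕ) (T : X ≃ₜ X)
    (K : Set (X × X)) (hK : IsCompact K)
    (hKdiag : K ⊆ {p : X × X | p.1 ≠ p.2}) :
    IsOpen {f : C(X, Fin d → Set.Icc (0 : ℝ) 1) |
      ∀ p ∈ K, ∃ n : ℤ, f ((T.toEquiv ^ n) p.1) ≠ f ((T.toEquiv ^ n) p.2)} := by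
  rcases K.eq_empty_or_nonempty with rfl | hKne
  · have : {f : C(X, Fin d → Set.Icc (0 : ℝ) 1) |
        ∀ p ∈ (∅ : Set (X × X)), ∃ n : ℤ,
          f ((T.toEquiv ^ n) p.1) ≠ f ((T.toEquiv ^ n) p.2)} = Set.univ := by
      ext f; simp
    rw [this]; exact isOpen_univ
  rw [Metric.isOpen_iff]
  intro f hf
  -- open cover of K
  set g : ℤ → X × X → ℝ := fun n p =>
    dist (f ((T.toEquiv ^ n) p.1)) (f ((T.toEquiv ^ n) p.2)) with hg
  have hgc : ∀ n : ℤ, Continuous (g n) := by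
    intro n
    exact Continuous.dist
      (f.continuous.comp ((zpow_continuous_aux T n).comp continuous_fst))
      (f.continuous.comp ((zpow_continuous_aux T n).comp continuous_snd))
  have hcover : K ⊆ ⋃ n : ℤ, {p : X × X | 0 < g n p} := by
    intro p hp
    obtain ⟨n, hn⟩ := hf p hp
    exact Set.mem_iUnion.2 ⟨n, dist_pos.2 hn⟩
  obtain ⟨t, ht⟩ := hK.elim_finite_subcover (fun n : ℤ => {p : X × X | 0 < g n p})
    (fun n => isOpen_lt continuous_const (hgc n)) hcover
  obtain ⟨p0, hp0⟩ := hKne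
  have htne : t.Nonempty := by
    have := ht hp0
    simp only [Set.mem_iUnion] at this
    obtain ⟨n, hn, _⟩ := this
    exact ⟨n, hn⟩
  set G : X × X → ℝ := fun p => t.sup' htne fun n => g n p with hG
  have hGc : Continuous G :=
    Continuous.finset_sup'_apply htne fun n _ => hgc n
  obtain ⟨pm, hpm, hmin⟩ := hK.exists_isMinOn ⟨p0, hp0⟩ hGc.continuousOn
  have hGpos : 0 < G pm := by
    have := ht hpm
    simp only [Set.mem_iUnion] at this
    obtain ⟨n, hn, hlt⟩ := this
    exact lt_of_lt_of_le hlt (Finset.le_sup' (fun m => g m pm) hn)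
  refine ⟨G pm / 3, by linarith, ?_⟩
  intro f' hf'
  rw [Metric.mem_ball] at hf'
  intro p hp
  obtain ⟨n, hn, hsup⟩ := Finset.exists_mem_eq_sup' htne fun m => g m p
  refine ⟨n, ?_⟩
  have h1 : G pm ≤ g n p := le_of_le_of_eq (hmin hp) hsup
  have h2 : dist (f ((T.toEquiv ^ n) p.1)) (f' ((T.toEquiv ^ n) p.1)) ≤ dist f f' :=
    ContinuousMap.dist_apply_le_dist _
  have h3 : dist (f ((T.toEquiv ^ n) p.2)) (f' ((T.toEquiv ^ n) p.2)) ≤ dist f f' :=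
    ContinuousMap.dist_apply_le_dist _
  intro heq
  rw [heq] at h2
  have h4 : g n p ≤ dist (f ((T.toEquiv ^ n) p.1)) (f' ((T.toEquiv ^ n) p.1))
      + dist (f' ((T.toEquiv ^ n) p.1)) (f ((T.toEquiv ^ n) p.2)) := dist_triangle _ _ _
  rw [heq] at h4
  have h5 : dist (f' ((T.toEquiv ^ n) p.2)) (f ((T.toEquiv ^ n) p.2)) ≤ dist f f' := by
    rw [dist_comm]; exact h3
  have hd : dist f f' < G pm / 3 := by rw [dist_comm]; exact hf'
  linarith [h4, h2, h5, h1]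
end

section
/- Let n : X → R be any function on a set X with a map T : X → X, let M be an even positive integer, and suppose there is at most one index j with −(3/2)M ≤ j ≤ M/2 − 2 such that n(T^{j+1}x) ≠ n(T^j x) + 1. Then there exists an integer r with −(3/2)M ≤ r ≤ 0 such that ⌊n(T^r x)⌋ mod M ≤ M/2 and for all s with r ≤ s ≤ r + M/2 − 1: ⌈n(T^s x)⌉ mod M = (⌈n(T^r x)⌉ mod M) + s − r and ⌊n(T^s x)⌋ mod M = (⌊n(T^r x)⌋ mod M) + s − r. -/
private lemma modadd (n A d : ℤ) (h1 : 0 ≤ A % n + d) (h2 : A % n + d < n) :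
    (A + d) % n = A % n + d := by
  have h3 : A + d = (A % n + d) + n * (A / n) := by rw [Int.emod_def]; ring
  rw [h3, Int.add_mul_emod_self_left, Int.emod_eq_of_lt h1 h2]

private lemma aux {X : Type*} (T : Equiv.Perm X) (g : X → ℝ) (x : X) (m c : ℤ) (hm : 1 ≤ m)
    (hrun : ∀ i : ℤ, c ≤ i → i ≤ c + 2 * m - 2 → g ((T ^ (i + 1)) x) = g ((T ^ i) x) + 1) :
    ∃ r : ℤ, c ≤ r ∧ r ≤ c + m ∧ ⌊g ((T ^ r) x)⌋ % (2 * m) ≤ m ∧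
      ∀ s : ℤ, r ≤ s → s ≤ r + m - 1 →
        ⌈g ((T ^ s) x)⌉ % (2 * m) = ⌈g ((T ^ r) x)⌉ % (2 * m) + s - r ∧
        ⌊g ((T ^ s) x)⌋ % (2 * m) = ⌊g ((T ^ r) x)⌋ % (2 * m) + s - r := by
  have hval : ∀ d : ℕ, (d : ℤ) ≤ 2 * m - 1 → g ((T ^ (c + (d : ℤ))) x) = g ((T ^ c) x) + (d : ℝ) := by
    intro d
    induction d with
    | zero => intro _; simp
    | succ d ih =>
      intro hd
      have hd' : (d : ℤ) ≤ 2 * m - 1 := by push_cast at hd; omega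
      have h1 : c + ((d : ℕ) + 1 : ℤ) = (c + (d : ℤ)) + 1 := by ring
      have h2 := hrun (c + (d : ℤ)) (by omega) (by push_cast at hd; omega)
      push_cast
      rw [h1, h2, ih hd']
      push_cast
      ring
  have ha : ∀ j : ℤ, c ≤ j → j ≤ c + 2 * m - 1 →
      g ((T ^ j) x) = g ((T ^ c) x) + ((j - c : ℤ) : ℝ) := by
    intro j h1 h2
    have hj : j = c + ((j - c).toNat : ℤ) := by omega
    calc g ((T ^ j) x) = g ((T ^ (c + ((j - c).toNat : ℤ))) x) := by rw [← hj]
      _ = g ((T ^ c) x) + (((j - c).toNat : ℕ) : ℝ) := hval _ (by omega)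
      _ = g ((T ^ c) x) + ((j - c : ℤ) : ℝ) := by
          congr 1
          exact_mod_cast Int.toNat_of_nonneg (by omega : (0:ℤ) ≤ j - c)
  set a := g ((T ^ c) x) with haa
  set e := ⌊a⌋ with hee
  set n := 2 * m with hnn
  have hn : 0 < n := by omega
  set t := (-e) % n with htt
  have ht0 : 0 ≤ t := Int.emod_nonneg _ (by omega)
  have ht1 : t < n := Int.emod_lt_of_pos _ hn
  set r := if t ≤ m then c + t else c with hrr
  have hr1 : c ≤ r := by rw [hrr]; split <;> omega
  have hr2 : r ≤ c + m := by rw [hrr]; split <;> omega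
  have hgr : g ((T ^ r) x) = a + ((r - c : ℤ) : ℝ) := ha r hr1 (by omega)
  have hFr : ⌊g ((T ^ r) x)⌋ = e + (r - c) := by rw [hgr, Int.floor_add_intCast]
  set f := ⌊g ((T ^ r) x)⌋ % n with hff
  have hf0 : 0 ≤ f := Int.emod_nonneg _ (by omega)
  have hf1 : f ≤ m - 1 := by
    rw [hff, hFr]
    by_cases hc : t ≤ m
    · have hrc : r - c = t := by rw [hrr, if_pos hc]; ring
      have h2 : e + t = n * (-((-e) / n)) := by rw [htt, Int.emod_def]; ring
      rw [hrc, h2, Int.mul_emod_right]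
      omega
    · have hrc : r - c = 0 := by rw [hrr, if_neg hc]; ring
      have hq := Int.mul_ediv_add_emod (-e) n
      rw [← htt] at hq
      have h3 : e + 0 = (n - t) + n * (-((-e) / n) - 1) := by linear_combination hq
      rw [hrc, h3, Int.add_mul_emod_self_left, Int.emod_eq_of_lt (by omega) (by omega)]
      omega
  set C := ⌈g ((T ^ r) x)⌉ with hCC
  have hC1 : ⌊g ((T ^ r) x)⌋ ≤ C := Int.floor_le_ceil _
  have hC2 : C ≤ ⌊g ((T ^ r) x)⌋ + 1 := Int.ceil_le_floor_add_one _
  have hCr : C % n = f + (C - ⌊g ((T ^ r) x)⌋) := by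
    have : C = ⌊g ((T ^ r) x)⌋ + (C - ⌊g ((T ^ r) x)⌋) := by ring
    rw [this, modadd n _ _ (by omega) (by omega), ← hff]
    ring
  refine ⟨r, hr1, hr2, by omega, ?_⟩
  intro s hs1 hs2
  have hgs : g ((T ^ s) x) = g ((T ^ r) x) + ((s - r : ℤ) : ℝ) := by
    rw [ha s (by omega) (by omega), hgr]
    push_cast
    ring
  have hFs : ⌊g ((T ^ s) x)⌋ = ⌊g ((T ^ r) x)⌋ + (s - r) := by
    rw [hgs, Int.floor_add_intCast]
  have hCs : ⌈g ((T ^ s) x)⌉ = C + (s - r) := by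
    rw [hgs, hCC, Int.ceil_add_intCast]
  constructor
  · rw [hCs, modadd n _ _ (by omega) (by omega), hCr]
    omega
  · rw [hFs, modadd n _ _ (by omega) (by omega)]
    omega

theorem stmt_7 {X : Type*} (T : Equiv.Perm X) (g : X → ℝ) (x : X)
    (M : ℕ) (hM : 0 < M) (hMeven : Even M)
    (huniq : ∀ j k : ℤ,
      (-(3 * (M : ℤ)) / 2 ≤ j ∧ j ≤ (M : ℤ) / 2 - 2 ∧ g ((T ^ (j + 1)) x) ≠ g ((T ^ j) x) + 1) →
      (-(3 * (M : ℤ)) / 2 ≤ k ∧ k ≤ (M : ℤ) / 2 - 2 ∧ g ((T ^ (k + 1)) x) ≠ g ((T ^ k) x) + 1) →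
      j = k) :
    ∃ r : ℤ, -(3 * (M : ℤ)) / 2 ≤ r ∧ r ≤ 0 ∧
      ⌊g ((T ^ r) x)⌋ % (M : ℤ) ≤ (M : ℤ) / 2 ∧
      ∀ s : ℤ, r ≤ s → s ≤ r + (M : ℤ) / 2 - 1 →
        ⌈g ((T ^ s) x)⌉ % (M : ℤ) = ⌈g ((T ^ r) x)⌉ % (M : ℤ) + s - r ∧
        ⌊g ((T ^ s) x)⌋ % (M : ℤ) = ⌊g ((T ^ r) x)⌋ % (M : ℤ) + s - r := by
  obtain ⟨m0, hm0⟩ := hMeven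
  set m : ℤ := (m0 : ℤ) with hmm
  have hM2 : (M : ℤ) = 2 * m := by rw [hmm]; exact_mod_cast by omega
  have hm1 : 1 ≤ m := by omega
  have hL : -(3 * (M : ℤ)) / 2 = -(3 * m) := by omega
  have hR : (M : ℤ) / 2 = m := by omega
  by_cases hex : ∃ j : ℤ, -(3 * m) ≤ j ∧ j ≤ -m - 2 ∧ g ((T ^ (j + 1)) x) ≠ g ((T ^ j) x) + 1
  · obtain ⟨j0, hj1, hj2, hj3⟩ := hex
    have hrun : ∀ i : ℤ, -m ≤ i → i ≤ -m + 2 * m - 2 → g ((T ^ (i + 1)) x) = g ((T ^ i) x) + 1 := by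
      intro i hi1 hi2
      by_contra hne
      have := huniq i j0 ⟨by omega, by omega, hne⟩ ⟨by omega, by omega, hj3⟩
      omega
    obtain ⟨r, h1, h2, h3, h4⟩ := aux T g x m (-m) hm1 hrun
    refine ⟨r, by omega, by omega, by rw [hM2]; omega, ?_⟩
    intro s hs1 hs2
    rw [hR] at hs2
    rw [hM2]
    exact h4 s hs1 hs2
  · have hrun : ∀ i : ℤ, -(3 * m) ≤ i → i ≤ -(3 * m) + 2 * m - 2 →
        g ((T ^ (i + 1)) x) = g ((T ^ i) x) + 1 := by
      intro i hi1 hi2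
      by_contra hne
      exact hex ⟨i, hi1, by omega, hne⟩
    obtain ⟨r, h1, h2, h3, h4⟩ := aux T g x m (-(3 * m)) hm1 hrun
    refine ⟨r, by omega, by omega, by rw [hM2]; omega, ?_⟩
    intro s hs1 hs2
    rw [hR] at hs2
    rw [hM2]
    exact h4 s hs1 hs2
end

section
/- Let X be a compact metric space, T : X → X a homeomorphism, Z a compact metric space, S : Z → Z a homeomorphism, π : X → Z a continuous equivariant surjection, and ε > 0. Then the set D_ε^π = {f ∈ C(X,[0,1]^d) : the map I_f × π : X → ([0,1]^d)^Z × Z is an ε-embedding} is open in C(X,[0,1]^d) with the supremum metric. -/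
private lemma cont_zpow' {X : Type*} [TopologicalSpace X] (T : X ≃ₜ X) (k : ℤ) :
    Continuous fun x : X => (T.toEquiv ^ k) x := by
  rcases k with n | n
  · rw [Int.ofNat_eq_coe, zpow_natCast]
    simpa [Equiv.Perm.coe_pow] using T.continuous.iterate n
  · rw [zpow_negSucc, ← inv_pow]
    have h : (T.toEquiv⁻¹ : Equiv.Perm X) = T.symm.toEquiv := rfl
    simp only [h, Equiv.Perm.coe_pow, Function.iterate_succ_apply']
    exact T.symm.continuous.comp ((T.symm.continuous.iterate n).comp continuous_id)

theorem stmt_9 {X Z : Type*} [MetricSpace X] [CompactSpace X]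
    [MetricSpace Z] [CompactSpace Z] (d : ℕ)
    (T : X ≃ₜ X) (S : Z ≃ₜ Z) (π : X → Z) (hπcont : Continuous π)
    (hπsurj : Function.Surjective π) (hπequiv : ∀ x, π (T x) = S (π x))
    (ε : ℝ) (hε : 0 < ε) :
    IsOpen {f : C(X, Fin d → Set.Icc (0 : ℝ) 1) |
      ∀ z : (ℤ → (Fin d → Set.Icc (0 : ℝ) 1)) × Z,
        Metric.diam ((fun x : X => ((fun k : ℤ => f ((T.toEquiv ^ k) x)), π x)) ⁻¹' {z}) < ε} := by
  set E := Fin d → Set.Icc (0 : ℝ) 1 with hE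
  rw [Metric.isOpen_iff]
  intro f hf
  rcases isEmpty_or_nonempty X with hX | hX
  · refine ⟨1, one_pos, fun g _ z => ?_⟩
    have : ((fun x : X => ((fun k : ℤ => g ((T.toEquiv ^ k) x)), π x)) ⁻¹' {z}) = ∅ :=
      Set.eq_empty_of_isEmpty _
    rw [this, Metric.diam_empty]; exact hε
  -- the "orbit map" associated to a function
  have hFc : ∀ g : C(X, E), Continuous
      (fun x : X => ((fun k : ℤ => g ((T.toEquiv ^ k) x)), π x)) := fun g =>
    (continuous_pi fun k => g.continuous.comp (cont_zpow' T k)).prodMk hπcont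
  set F : C(X, E) → X → (ℤ → E) × Z :=
    fun g x => ((fun k : ℤ => g ((T.toEquiv ^ k) x)), π x) with hFdef
  -- the set of pairs identified by F f is compact and nonempty
  set L : Set (X × X) := {p | F f p.1 = F f p.2} with hLdef
  have hLcomp : IsCompact L :=
    (isClosed_eq ((hFc f).comp continuous_fst) ((hFc f).comp continuous_snd)).isCompact
  have hLne : L.Nonempty := ⟨(Classical.arbitrary X, Classical.arbitrary X), rfl⟩
  obtain ⟨p₀, hp₀L, hp₀max⟩ := hLcomp.exists_isMaxOn hLne
    ((continuous_fst.dist continuous_snd).continuousOn)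
  set m := dist p₀.1 p₀.2 with hm
  have hmε : m < ε := by
    have h1 : p₀.1 ∈ F f ⁻¹' {F f p₀.1} := rfl
    have h2 : p₀.2 ∈ F f ⁻¹' {F f p₀.1} := by
      simp only [Set.mem_preimage, Set.mem_singleton_iff]
      exact hp₀L.symm
    calc m ≤ Metric.diam (F f ⁻¹' {F f p₀.1}) :=
          Metric.dist_le_diam_of_mem Metric.isBounded_of_compactSpace h1 h2
      _ < ε := hf (F f p₀.1)
  set δ := (m + ε) / 2 with hδdef
  have hm0 : 0 ≤ m := dist_nonneg
  have hmδ : m < δ := by rw [hδdef]; linarith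
  have hδε : δ < ε := by rw [hδdef]; linarith
  have hδ0 : 0 < δ := by rw [hδdef]; linarith
  set K : Set (X × X) := {p | δ ≤ dist p.1 p.2} with hKdef
  have hKcomp : IsCompact K :=
    (isClosed_le continuous_const (continuous_fst.dist continuous_snd)).isCompact
  have hKL : ∀ p ∈ K, F f p.1 ≠ F f p.2 := by
    intro p hp heq
    have : dist p.1 p.2 ≤ m := hp₀max heq
    have : δ ≤ dist p.1 p.2 := hp
    linarith
  -- local separation data around each point of K
  have key : ∀ p : K, ∃ U : Set (X × X), IsOpen U ∧ (p : X × X) ∈ U ∧ ∃ r > 0,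
      ∀ q ∈ U, ∀ g : C(X, E), dist g f < r →
        ¬(π q.1 = π q.2 ∧ ∀ k : ℤ, g ((T.toEquiv ^ k) q.1) = g ((T.toEquiv ^ k) q.2)) := by
    rintro ⟨p, hp⟩
    have hne := hKL p hp
    by_cases hπp : π p.1 = π p.2
    · have hek : ∃ k : ℤ, f ((T.toEquiv ^ k) p.1) ≠ f ((T.toEquiv ^ k) p.2) := by
        by_contra h
        push_neg at h
        exact hne (Prod.ext (funext h) hπp)
      obtain ⟨k, hk⟩ := hek
      set r := dist (f ((T.toEquiv ^ k) p.1)) (f ((T.toEquiv ^ k) p.2)) with hr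
      have hr0 : 0 < r := dist_pos.2 hk
      refine ⟨{q | r / 2 < dist (f ((T.toEquiv ^ k) q.1)) (f ((T.toEquiv ^ k) q.2))},
        isOpen_lt continuous_const
          ((f.continuous.comp ((cont_zpow' T k).comp continuous_fst)).dist
            (f.continuous.comp ((cont_zpow' T k).comp continuous_snd))),
        by simpa using by linarith, r / 8, by positivity, ?_⟩
      rintro q hq g hg ⟨hπq, hgq⟩
      have hq' : r / 2 < dist (f ((T.toEquiv ^ k) q.1)) (f ((T.toEquiv ^ k) q.2)) := hq
      have h1 : dist (f ((T.toEquiv ^ k) q.1)) (g ((T.toEquiv ^ k) q.2)) ≤ dist f g := by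
        rw [← hgq k]; exact ContinuousMap.dist_apply_le_dist _
      have h2 : dist (g ((T.toEquiv ^ k) q.2)) (f ((T.toEquiv ^ k) q.2)) ≤ dist g f :=
        ContinuousMap.dist_apply_le_dist _
      have h3 : dist (f ((T.toEquiv ^ k) q.1)) (f ((T.toEquiv ^ k) q.2)) ≤
          dist (f ((T.toEquiv ^ k) q.1)) (g ((T.toEquiv ^ k) q.2)) +
          dist (g ((T.toEquiv ^ k) q.2)) (f ((T.toEquiv ^ k) q.2)) :=
        dist_triangle _ _ _
      have hfg : dist f g = dist g f := dist_comm f g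
      linarith
    · set r := dist (π p.1) (π p.2) with hr
      have hr0 : 0 < r := dist_pos.2 hπp
      refine ⟨{q | r / 2 < dist (π q.1) (π q.2)},
        isOpen_lt continuous_const
          ((hπcont.comp continuous_fst).dist (hπcont.comp continuous_snd)),
        by simpa using by linarith, 1, one_pos, ?_⟩
      rintro q hq g _ ⟨hπq, -⟩
      have hq' : r / 2 < dist (π q.1) (π q.2) := hq
      rw [hπq, dist_self] at hq'
      linarith
  choose U hUopen hUmem r hr0 hUgood using key
  obtain ⟨t, ht⟩ := hKcomp.elim_finite_subcover U hUopen
    (fun q hq => Set.mem_iUnion.2 ⟨⟨q, hq⟩, hUmem ⟨q, hq⟩⟩)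
  classical
  set ρ : ℝ := (insert (1 : ℝ) (t.image r)).min' (by simp) with hρdef
  have hρ0 : 0 < ρ := by
    have := (insert (1 : ℝ) (t.image r)).min'_mem (by simp)
    rw [← hρdef] at this
    rcases Finset.mem_insert.1 this with h | h
    · rw [h]; exact one_pos
    · obtain ⟨p, _, hp⟩ := Finset.mem_image.1 h
      rw [← hp]; exact hr0 p
  refine ⟨ρ, hρ0, fun g hg z => ?_⟩
  rw [Metric.mem_ball] at hg
  refine lt_of_le_of_lt (Metric.diam_le_of_forall_dist_le hδ0.le ?_) hδε
  intro x hx y hy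
  by_contra hxy
  push_neg at hxy
  have hxyK : (x, y) ∈ K := le_of_lt hxy
  obtain ⟨p, hpU⟩ := Set.mem_iUnion.1 (ht hxyK)
  obtain ⟨hpt, hqU⟩ := Set.mem_iUnion.1 hpU
  have hρle : ρ ≤ r p := Finset.min'_le _ _ (Finset.mem_insert_of_mem
    (Finset.mem_image_of_mem r hpt))
  have hx' : (fun k : ℤ => g ((T.toEquiv ^ k) x), π x) = z := hx
  have hy' : (fun k : ℤ => g ((T.toEquiv ^ k) y), π y) = z := hy
  refine hUgood p (x, y) hqU g (lt_of_lt_of_le hg hρle) ⟨?_, ?_⟩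
  · have := congrArg Prod.snd (hx'.trans hy'.symm)
    exact this
  · intro k
    exact congrFun (congrArg Prod.fst (hx'.trans hy'.symm)) k
end

section
/- Let (X,T) and (Y,S) be topological dynamical systems and φ : (Y,S) → (X,T) a factor map (continuous equivariant surjection). If (X,T) has the marker property, then (Y,S) has the marker property. -/
/-- The marker property for a homeomorphism `T` of a space `X`. -/
def MarkerProperty {X : Type*} [TopologicalSpace X] (T : X ≃ₜ X) : Prop :=
  ∀ n : ℕ, 0 < n → ∃ U : Set X, IsOpen U ∧
    (∀ i : ℕ, 1 ≤ i → i ≤ n - 1 → U ∩ (⇑T)^[i] '' U = ∅) ∧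
    ∃ m : ℕ, ∀ x : X, ∃ i : ℕ, 1 ≤ i ∧ i ≤ m ∧ x ∈ (⇑T)^[i] '' U

theorem stmt_11 {X Y : Type*} [MetricSpace X] [CompactSpace X]
    [MetricSpace Y] [CompactSpace Y] (T : X ≃ₜ X) (S : Y ≃ₜ Y)
    (φ : Y → X) (hφcont : Continuous φ) (hφsurj : Function.Surjective φ)
    (hφequiv : ∀ y, φ (S y) = T (φ y))
    (hX : MarkerProperty T) : MarkerProperty S := by
  have hiter : ∀ (i : ℕ) (y : Y), φ ((⇑S)^[i] y) = (⇑T)^[i] (φ y) := by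
    intro i
    induction i with
    | zero => intro y; simp
    | succ k ih =>
      intro y
      rw [Function.iterate_succ_apply', Function.iterate_succ_apply', hφequiv, ih]
  have hS : ∀ z : Y, φ (S.symm z) = T.symm (φ z) := by
    intro z
    have h := hφequiv (S.symm z)
    rw [S.apply_symm_apply] at h
    exact (T.toEquiv.symm_apply_eq.mpr h).symm
  have hiterS : ∀ (i : ℕ) (y : Y), φ ((⇑S.symm)^[i] y) = (⇑T.symm)^[i] (φ y) := by
    intro i
    induction i with
    | zero => intro y; simp
    | succ k ih =>
      intro y
      rw [Function.iterate_succ_apply', Function.iterate_succ_apply', hS, ih]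
  have hTcancel : ∀ (i : ℕ) (x : X), (⇑T.symm)^[i] ((⇑T)^[i] x) = x :=
    fun i => Function.LeftInverse.iterate (fun x => T.symm_apply_apply x) i
  have hScancel : ∀ (i : ℕ) (z : Y), (⇑S)^[i] ((⇑S.symm)^[i] z) = z :=
    fun i => Function.LeftInverse.iterate (fun z => S.apply_symm_apply z) i
  intro n hn
  obtain ⟨U, hUopen, hUdisj, m, hUcov⟩ := hX n hn
  refine ⟨φ ⁻¹' U, hUopen.preimage hφcont, ?_, m, ?_⟩
  · intro i h1 h2
    ext y
    simp only [Set.mem_inter_iff, Set.mem_empty_iff_false, iff_false]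
    rintro ⟨hy, z, hz, rfl⟩
    have : φ ((⇑S)^[i] z) ∈ U ∩ (⇑T)^[i] '' U := ⟨hy, φ z, hz, (hiter i z).symm⟩
    rw [hUdisj i h1 h2] at this
    exact this
  · intro y
    obtain ⟨i, h1, h2, x, hxU, hx⟩ := hUcov (φ y)
    refine ⟨i, h1, h2, S.symm^[i] y, ?_, hScancel i y⟩
    have : (⇑T.symm)^[i] (φ y) = x := by rw [← hx, hTcancel]
    simp only [Set.mem_preimage, hiterS i y, this]
    exact hxU
end
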